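/- Let $V$ be a finite-dimensional complex vector space and let $[0,\infty) \ni s \mapsto H_s$ be a continuous family of positive Hermitian inner products on $V$ such that for each nonzero $v \in V$, the function $s \mapsto \log H_s(v,v)$ is convex in $s$ when applied to the dual family (i.e., the family is positive in the Griffiths sense, meaning $s \mapsto \log H_s^*(w,w)$ is convex for all nonzero $w$ in the dual space $V^*$). Then the function $s \mapsto \log \det H_s$ is concave on $[0,\infty)$. -/

import Mathlib

open Matrix
open scoped ComplexOrder

namespace Stmt3Aux

variable {n : ℕ}

lemma dot_congr (S X : Matrix (Fin n) (Fin n) ℂ) (w : Fin n → ℂ) :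
    star w ⬝ᵥ (Sᴴ * X * S) *ᵥ w = star (S *ᵥ w) ⬝ᵥ X *ᵥ (S *ᵥ w) := by
  rw [← mulVec_mulVec, ← mulVec_mulVec, dotProduct_mulVec, ← star_mulVec]

lemma single_dot (X : Matrix (Fin n) (Fin n) ℂ) (j : Fin n) :
    star (Pi.single j 1) ⬝ᵥ X *ᵥ (Pi.single j 1) = X j j := by
  have h1 : star (Pi.single j 1 : Fin n → ℂ) = Pi.single j 1 := by
    ext i
    rcases eq_or_ne i j with rfl | h
    · simp
    · simp [Pi.single_apply, h]
  rw [h1, mulVec_single, single_dotProduct]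
  simp

lemma posDef_congr {S X : Matrix (Fin n) (Fin n) ℂ} (hS : IsUnit S.det)
    (hX : X.PosDef) : (Sᴴ * X * S).PosDef := by
  refine PosDef.of_dotProduct_mulVec_pos (isHermitian_conjTranspose_mul_mul S hX.1) fun w hw => ?_
  rw [dot_congr]
  refine hX.dotProduct_mulVec_pos (x := S *ᵥ w) fun h => hw ?_
  have hinj : Function.Injective (S.mulVec) :=
    mulVec_injective_iff_isUnit.mpr ((isUnit_iff_isUnit_det S).mpr hS)
  have h0 : S *ᵥ w = S *ᵥ 0 := by simpa using h
  simpa using hinj h0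

lemma diag_re_pos {X : Matrix (Fin n) (Fin n) ℂ} (hX : X.PosDef) (j : Fin n) :
    0 < (X j j).re := by
  have hne : (Pi.single j 1 : Fin n → ℂ) ≠ 0 := fun h =>
    (one_ne_zero : (1:ℂ) ≠ 0) (by simpa using congrFun h j)
  have := hX.re_dotProduct_pos hne
  rwa [single_dot] at this

lemma det_eq_ofReal_prod {A : Matrix (Fin n) (Fin n) ℂ} (hA : A.IsHermitian) :
    A.det = ((∏ j, hA.eigenvalues j : ℝ) : ℂ) := by
  rw [hA.det_eq_prod_eigenvalues]
  norm_cast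

lemma det_re_pos {A : Matrix (Fin n) (Fin n) ℂ} (hA : A.PosDef) : 0 < A.det.re := by
  rw [det_eq_ofReal_prod hA.1, Complex.ofReal_re]
  exact Finset.prod_pos fun j _ => hA.eigenvalues_pos j

lemma det_inv_re {A : Matrix (Fin n) (Fin n) ℂ} (hA : A.IsHermitian) :
    (A⁻¹).det.re = (A.det.re)⁻¹ := by
  have h2 : A.det = ((A.det.re : ℝ) : ℂ) := by
    rw [det_eq_ofReal_prod hA, Complex.ofReal_re]
  rw [det_nonsing_inv, Ring.inverse_eq_inv', h2]
  simp [← Complex.ofReal_inv]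

lemma sum_eigenvalues_eq {A : Matrix (Fin n) (Fin n) ℂ} (hA : A.IsHermitian) :
    ∑ j, hA.eigenvalues j = ∑ j, (A j j).re := by
  have hUU : star (hA.eigenvectorUnitary : Matrix (Fin n) (Fin n) ℂ) *
      (hA.eigenvectorUnitary : Matrix (Fin n) (Fin n) ℂ) = 1 :=
    Unitary.coe_star_mul_self hA.eigenvectorUnitary
  have htr : A.trace = (Matrix.diagonal (RCLike.ofReal ∘ hA.eigenvalues)).trace := by
    conv_lhs => rw [hA.spectral_theorem, Unitary.conjStarAlgAut_apply]
    rw [trace_mul_cycle, hUU, one_mul]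
  have h2 : A.trace = ((∑ j, hA.eigenvalues j : ℝ) : ℂ) := by
    rw [htr, trace_diagonal]
    simp only [Function.comp_apply]
    norm_cast
  have h3 := congrArg Complex.re h2
  rw [Complex.ofReal_re] at h3
  rw [← h3, Matrix.trace, Complex.re_sum]
  rfl

/-- Hadamard's inequality for positive definite matrices. -/
lemma hadamard {M : Matrix (Fin n) (Fin n) ℂ} (hM : M.PosDef) :
    M.det.re ≤ ∏ j, (M j j).re := by
  rcases Nat.eq_zero_or_pos n with h0 | hn
  · subst h0
    simp [Matrix.det_fin_zero]
  have hc : ∀ j, 0 < (M j j).re := diag_re_pos hM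
  set t : Fin n → ℝ := fun j => (Real.sqrt ((M j j).re))⁻¹ with ht_def
  have ht : ∀ j, 0 < t j := fun j => inv_pos.mpr (Real.sqrt_pos.mpr (hc j))
  have htt : ∀ j, t j * t j = ((M j j).re)⁻¹ := by
    intro j
    rw [ht_def]
    dsimp only
    rw [← mul_inv, Real.mul_self_sqrt (hc j).le]
  set E : Matrix (Fin n) (Fin n) ℂ := Matrix.diagonal (fun j => (t j : ℂ)) with hE_def
  have hEH : Eᴴ = E := by
    rw [hE_def, diagonal_conjTranspose]
    refine congrArg Matrix.diagonal (funext fun j => ?_)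
    simp [Complex.conj_ofReal]
  have hEdet : E.det = ((∏ j, t j : ℝ) : ℂ) := by
    rw [hE_def, det_diagonal]
    norm_cast
  have hEunit : IsUnit E.det := by
    rw [hEdet, isUnit_iff_ne_zero]
    exact_mod_cast (Finset.prod_pos fun j _ => ht j).ne'
  set P : Matrix (Fin n) (Fin n) ℂ := Eᴴ * M * E with hP_def
  have hP : P.PosDef := posDef_congr hEunit hM
  have hPdiag : ∀ j, (P j j).re = 1 := by
    intro j
    have h1 : P j j = (t j : ℂ) * M j j * (t j : ℂ) := by
      rw [hP_def, hEH, hE_def]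
      simp [mul_diagonal, diagonal_mul]
    have h2 : ((t j : ℂ) * M j j * (t j : ℂ)).re = t j * t j * (M j j).re := by
      rw [mul_comm ((t j : ℂ) * M j j) ((t j : ℂ)), ← mul_assoc, ← Complex.ofReal_mul,
        Complex.re_ofReal_mul]
    rw [h1, h2, htt j, inv_mul_cancel₀ (hc j).ne']
  have hsum : ∑ j, hP.1.eigenvalues j = (n : ℝ) := by
    rw [sum_eigenvalues_eq hP.1]
    simp [hPdiag]
  have hev : ∀ j, 0 < hP.1.eigenvalues j := hP.eigenvalues_pos
  have hn' : (n : ℝ) ≠ 0 := by exact_mod_cast hn.ne'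
  have hAMGM : (∏ j, hP.1.eigenvalues j ^ ((n : ℝ)⁻¹)) ≤ 1 := by
    have h := Real.geom_mean_le_arith_mean_weighted Finset.univ
      (fun _ => (n : ℝ)⁻¹) (fun j => hP.1.eigenvalues j)
      (fun i _ => by positivity)
      (by
        rw [Finset.sum_const, Finset.card_univ, Fintype.card_fin, nsmul_eq_mul]
        field_simp)
      (fun i _ => (hev i).le)
    refine h.trans ?_
    rw [← Finset.mul_sum, hsum, inv_mul_cancel₀ hn']
  have hdetP1 : P.det.re ≤ 1 := by
    rw [det_eq_ofReal_prod hP.1, Complex.ofReal_re]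
    have h1 : ∏ j, hP.1.eigenvalues j = (∏ j, hP.1.eigenvalues j ^ ((n : ℝ)⁻¹)) ^ n := by
      rw [← Finset.prod_pow]
      refine Finset.prod_congr rfl fun j _ => ?_
      rw [← Real.rpow_natCast (hP.1.eigenvalues j ^ ((n:ℝ)⁻¹)) n,
        ← Real.rpow_mul (hev j).le, inv_mul_cancel₀ hn', Real.rpow_one]
    rw [h1]
    exact pow_le_one₀ (Finset.prod_nonneg fun j _ => Real.rpow_nonneg (hev j).le _) hAMGM
  have hdet_rel : P.det.re = (∏ j, (M j j).re)⁻¹ * M.det.re := by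
    have h1 : P.det = ((∏ j, t j : ℝ) : ℂ) * M.det * ((∏ j, t j : ℝ) : ℂ) := by
      rw [hP_def, det_mul, det_mul, hEH, hEdet]
    have h2 : P.det = (((∏ j, t j) * (∏ j, t j) : ℝ) : ℂ) * M.det := by
      rw [h1]; push_cast; ring
    have h3 : (∏ j, t j) * (∏ j, t j) = (∏ j, (M j j).re)⁻¹ := by
      rw [← Finset.prod_mul_distrib, ← Finset.prod_inv_distrib]
      exact Finset.prod_congr rfl fun j _ => htt j
    rw [h2, h3, Complex.re_ofReal_mul]
  have hprodpos : 0 < ∏ j, (M j j).re := Finset.prod_pos fun j _ => hc j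
  have hkey := hdet_rel ▸ hdetP1
  calc M.det.re = (∏ j, (M j j).re) * ((∏ j, (M j j).re)⁻¹ * M.det.re) := by
        field_simp
    _ ≤ (∏ j, (M j j).re) * 1 := mul_le_mul_of_nonneg_left hkey hprodpos.le
    _ = ∏ j, (M j j).re := mul_one _

end Stmt3Aux

open Stmt3Aux
open scoped MatrixOrder

/-- If `s ↦ H s` is a continuous family of positive definite Hermitian matrices on `[0,∞)`
(representing Hermitian inner products on a finite-dimensional complex vector space) which is
positive in the Griffiths sense, i.e. the dual family is Griffiths negative, meaning
`s ↦ log H*_s(w,w) = log (w* (H s)⁻¹ w)` is convex for every nonzero `w`, then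
`s ↦ log det H_s` is concave on `[0,∞)`. -/
theorem stmt3 (N : ℕ) (H : ℝ → Matrix (Fin N) (Fin N) ℂ)
    (hcont : Continuous H)
    (hHerm : ∀ s ∈ Set.Ici (0:ℝ), (H s).IsHermitian)
    (hPD : ∀ s ∈ Set.Ici (0:ℝ), (H s).PosDef)
    (hdual : ∀ w : Fin N → ℂ, w ≠ 0 →
      ConvexOn ℝ (Set.Ici 0) (fun s => Real.log (star w ⬝ᵥ (H s)⁻¹.mulVec w).re)) :
    ConcaveOn ℝ (Set.Ici 0) (fun s => Real.log (H s).det.re) := by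
  refine ⟨convex_Ici 0, fun x hx y hy a b ha hb hab => ?_⟩
  have hs : a • x + b • y ∈ Set.Ici (0:ℝ) := (convex_Ici 0) hx hy ha hb hab
  set s : ℝ := a • x + b • y with hs_def
  set A : Matrix (Fin N) (Fin N) ℂ := (H x)⁻¹ with hA_def
  set B : Matrix (Fin N) (Fin N) ℂ := (H y)⁻¹ with hB_def
  set M : Matrix (Fin N) (Fin N) ℂ := (H s)⁻¹ with hM_def
  have hA : A.PosDef := (hPD x hx).inv
  have hB : B.PosDef := (hPD y hy).inv
  have hM : M.PosDef := (hPD s hs).inv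
  -- Key inequality
  have key : M.det.re ≤ A.det.re ^ a * B.det.re ^ b := by
    set R0 : Matrix (Fin N) (Fin N) ℂ := CFC.sqrt A with hR0_def
    have hR0sq : R0 * R0 = A := CFC.sqrt_mul_sqrt_self A hA.posSemidef.nonneg
    have hR0det : IsUnit R0.det := by
      have hmul : R0.det * R0.det = A.det := by rw [← det_mul, hR0sq]
      have hAdet : A.det ≠ 0 := by
        intro h
        have := det_re_pos hA
        rw [h] at this
        simp at this
      rw [isUnit_iff_ne_zero]
      intro h
      rw [h, mul_zero] at hmul
      exact hAdet hmul.symm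
    set R : Matrix (Fin N) (Fin N) ℂ := R0⁻¹ with hR_def
    have hRH : Rᴴ = R := by
      rw [hR_def, Matrix.conjTranspose_nonsing_inv, (CFC.sqrt_nonneg A).posSemidef.1.eq]
    have hRdet : IsUnit R.det := by
      rw [hR_def, det_nonsing_inv, Ring.inverse_eq_inv']
      exact hR0det.inv
    have hRAR : R * A * R = 1 := by
      rw [hR_def, ← hR0sq]
      have e : R0⁻¹ * (R0 * R0) * R0⁻¹ = (R0⁻¹ * R0) * (R0 * R0⁻¹) := by noncomm_ring
      rw [e, nonsing_inv_mul _ hR0det, mul_nonsing_inv _ hR0det, one_mul]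
    set C : Matrix (Fin N) (Fin N) ℂ := Rᴴ * B * R with hC_def
    have hC : C.PosDef := posDef_congr hRdet hB
    set U : Matrix (Fin N) (Fin N) ℂ := (hC.1.eigenvectorUnitary : Matrix (Fin N) (Fin N) ℂ)
      with hU_def
    set ev : Fin N → ℝ := hC.1.eigenvalues with hev_def
    have hUCU : star U * C * U = Matrix.diagonal (RCLike.ofReal ∘ ev) :=
      by have := hC.1.conjStarAlgAut_star_eigenvectorUnitary; rwa [Unitary.conjStarAlgAut_star_apply] at this
    have hUU : star U * U = 1 := Unitary.coe_star_mul_self hC.1.eigenvectorUnitary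
    have hUU' : U * star U = 1 := mem_unitaryGroup_iff.mp hC.1.eigenvectorUnitary.2
    have hUdet : IsUnit U.det :=
      (isUnit_iff_isUnit_det U).mp ⟨⟨U, star U, hUU', hUU⟩, rfl⟩
    set S : Matrix (Fin N) (Fin N) ℂ := R * U with hS_def
    have hSH : Sᴴ = star U * R := by
      rw [hS_def, conjTranspose_mul, hRH]
      rfl
    have hSdet : IsUnit S.det := by
      rw [hS_def, det_mul]
      exact hRdet.mul hUdet
    have hSA : Sᴴ * A * S = 1 := by
      rw [hSH, hS_def]
      have e : star U * R * A * (R * U) = star U * (R * A * R) * U := by noncomm_ring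
      rw [e, hRAR, mul_one, hUU]
    have hSB : Sᴴ * B * S = Matrix.diagonal (RCLike.ofReal ∘ ev) := by
      rw [hSH, hS_def, ← hUCU, hC_def, hRH]
      noncomm_ring
    have hevpos : ∀ j, 0 < ev j := hC.eigenvalues_pos
    set P : Matrix (Fin N) (Fin N) ℂ := Sᴴ * M * S with hP_def
    have hP : P.PosDef := posDef_congr hSdet hM
    have hdiag : ∀ j, (P j j).re ≤ (ev j) ^ b := by
      intro j
      set v : Fin N → ℂ := S *ᵥ (Pi.single j 1) with hv_def
      have hsingle : (Pi.single j 1 : Fin N → ℂ) ≠ 0 := fun h =>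
        (one_ne_zero : (1:ℂ) ≠ 0) (by simpa using congrFun h j)
      have hv : v ≠ 0 := by
        intro h
        have hinj : Function.Injective (S.mulVec) :=
          mulVec_injective_iff_isUnit.mpr ((isUnit_iff_isUnit_det S).mpr hSdet)
        have h0 : S *ᵥ (Pi.single j 1) = S *ᵥ 0 := by
          rw [hv_def] at h; simpa using h
        exact hsingle (by simpa using hinj h0)
      have hcvx := (hdual v hv).2 hx hy ha hb hab
      rw [← hs_def] at hcvx
      simp only [smul_eq_mul] at hcvx
      have eA : star v ⬝ᵥ (H x)⁻¹ *ᵥ v = (1 : Matrix (Fin N) (Fin N) ℂ) j j := by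
        rw [hv_def, ← dot_congr, ← hA_def, hSA, single_dot]
      have eB : star v ⬝ᵥ (H y)⁻¹ *ᵥ v = (Matrix.diagonal (RCLike.ofReal ∘ ev)) j j := by
        rw [hv_def, ← dot_congr, ← hB_def, hSB, single_dot]
      have eM : star v ⬝ᵥ (H s)⁻¹ *ᵥ v = P j j := by
        rw [hv_def, ← dot_congr, ← hM_def, hP_def, single_dot]
      rw [eA, eB, eM] at hcvx
      have h1 : ((1 : Matrix (Fin N) (Fin N) ℂ) j j).re = 1 := by simp
      have h2 : ((Matrix.diagonal (RCLike.ofReal ∘ ev) : Matrix (Fin N) (Fin N) ℂ) j j).re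
          = ev j := by
        simp [Matrix.diagonal_apply_eq]
      rw [h1, h2, Real.log_one, mul_zero, zero_add] at hcvx
      have hPjj : 0 < (P j j).re := diag_re_pos hP j
      have hlog : Real.log ((P j j).re) ≤ Real.log ((ev j) ^ b) := by
        rw [Real.log_rpow (hevpos j)]
        exact hcvx
      exact (Real.log_le_log_iff hPjj (Real.rpow_pos_of_pos (hevpos j) b)).mp hlog
    have hHad : P.det.re ≤ ∏ j, (ev j) ^ b :=
      (hadamard hP).trans (Finset.prod_le_prod (fun j _ => (diag_re_pos hP j).le)
        (fun j _ => hdiag j))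
    have hprod_rpow : (∏ j, (ev j) ^ b) = (∏ j, ev j) ^ b :=
      Real.finset_prod_rpow Finset.univ ev (fun j _ => (hevpos j).le) b
    set z : ℂ := S.det with hz_def
    set k : ℝ := Complex.normSq z with hk_def
    have hkpos : 0 < k := Complex.normSq_pos.mpr hSdet.ne_zero
    have hdcongr : ∀ X : Matrix (Fin N) (Fin N) ℂ, (Sᴴ * X * S).det.re = k * X.det.re := by
      intro X
      have h1 : (Sᴴ * X * S).det = (k : ℂ) * X.det := by
        rw [det_mul, det_mul, det_conjTranspose, ← hz_def, hk_def,
          Complex.normSq_eq_conj_mul_self]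
        simp only [Complex.star_def]
        ring
      rw [h1, Complex.re_ofReal_mul]
    have hAk : k * A.det.re = 1 := by
      have h := hdcongr A
      rw [hSA] at h
      simpa using h.symm
    have hBk : (∏ j, ev j) = k * B.det.re := by
      have h := hdcongr B
      rw [hSB] at h
      rw [← h, det_diagonal]
      have h2 : (∏ j, (RCLike.ofReal ∘ ev) j : ℂ) = ((∏ j, ev j : ℝ) : ℂ) := by
        simp only [Function.comp_apply]
        norm_cast
      rw [h2, Complex.ofReal_re]
    have hMk : P.det.re = k * M.det.re := hdcongr M
    have hBdet : 0 < B.det.re := det_re_pos hB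
    have hfinal : k * M.det.re ≤ k ^ b * B.det.re ^ b := by
      rw [← hMk]
      refine hHad.trans ?_
      rw [hprod_rpow, hBk]
      exact le_of_eq (Real.mul_rpow hkpos.le hBdet.le)
    have hAk' : A.det.re = k⁻¹ := by
      have hk' : k ≠ 0 := hkpos.ne'
      field_simp
      linear_combination hAk
    have hM_le : M.det.re ≤ k⁻¹ * (k ^ b * B.det.re ^ b) := by
      calc M.det.re = k⁻¹ * (k * M.det.re) := by field_simp
        _ ≤ k⁻¹ * (k ^ b * B.det.re ^ b) :=
            mul_le_mul_of_nonneg_left hfinal (inv_nonneg.mpr hkpos.le)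
    have hpow : k⁻¹ * k ^ b = (k⁻¹) ^ a := by
      rw [← Real.rpow_neg_one k, ← Real.rpow_add hkpos, ← Real.rpow_mul hkpos.le]
      congr 1
      linarith
    rw [hAk', ← hpow, mul_assoc]
    exact hM_le
  -- conclude
  have hHx : 0 < (H x).det.re := det_re_pos (hPD x hx)
  have hHy : 0 < (H y).det.re := det_re_pos (hPD y hy)
  have hHs : 0 < (H s).det.re := det_re_pos (hPD s hs)
  have hkey2 : ((H s).det.re)⁻¹ ≤ (((H x).det.re)⁻¹) ^ a * (((H y).det.re)⁻¹) ^ b := by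
    rw [← det_inv_re (hHerm s hs), ← det_inv_re (hHerm x hx), ← det_inv_re (hHerm y hy)]
    exact key
  have hlog : Real.log (((H s).det.re)⁻¹) ≤
      Real.log ((((H x).det.re)⁻¹) ^ a * (((H y).det.re)⁻¹) ^ b) :=
    (Real.log_le_log_iff (by positivity) (by positivity)).mpr hkey2
  rw [Real.log_mul (by positivity) (by positivity), Real.log_rpow (by positivity),
    Real.log_rpow (by positivity), Real.log_inv, Real.log_inv, Real.log_inv] at hlog
  simp only [smul_eq_mul]
  linarith
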